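/- Let T = {x_α : α < 𝔟} ⊆ [ℕ]^∞ be an unbounded tower, and let Y be a topological space such that for every α < 𝔟 the product {x_ξ : ξ < α} × Y satisfies S₁(B_Γ,B_Γ). Suppose that for every sequence ⟨𝒱_k⟩_{k∈ℕ} of countable γ-covers of (T ∪ Fin) × Y, with 𝒱_k = {V^k_n : n ∈ ℕ}, there exists a sequence ⟨n_k⟩_{k∈ℕ} of natural numbers such that {V^k_{n_k} : k ∈ ℕ} is a γ-cover of A × Y for some set A with Fin ⊆ A ⊆ T ∪ Fin and |T ∖ A| < 𝔟. Then (T ∪ Fin) × Y satisfies S₁(Γ,Γ). -/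

import Mathlib

open Filter Set

universe u

/-- `f ≤* g`: eventual domination. -/
def EvLE (f g : ℕ → ℕ) : Prop := ∀ᶠ n in Filter.atTop, f n ≤ g n

/-- The bounding number `𝔟`. -/
noncomputable def bCardinal : Cardinal.{0} :=
  sInf {c : Cardinal.{0} | ∃ F : Set (ℕ → ℕ),
    Cardinal.mk ↥F = c ∧ ¬ ∃ g : ℕ → ℕ, ∀ f ∈ F, EvLE f g}

/-- `Fin`: the family of (characteristic functions of) finite subsets of `ℕ`. -/
def finSupp : Set (ℕ → Bool) := {x | {n | x n = true}.Finite}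

/-- A γ-cover of a subset `S` of a topological space `Z`: an infinite family of open subsets
of `Z`, none containing `S`, such that every point of `S` belongs to all but finitely many
members. -/
def IsGammaCoverOf {Z : Type u} [TopologicalSpace Z] (S : Set Z) (𝒰 : Set (Set Z)) : Prop :=
  𝒰.Infinite ∧ (∀ U ∈ 𝒰, IsOpen U) ∧ (∀ U ∈ 𝒰, ¬ S ⊆ U) ∧
    ∀ z ∈ S, {U ∈ 𝒰 | z ∉ U}.Finite

/-- `S₁(Γ,Γ)`: from every sequence of γ-covers one can select single members forming a
γ-cover. -/
def SOneGammaGamma (Z : Type u) [TopologicalSpace Z] : Prop :=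
  ∀ 𝒰 : ℕ → Set (Set Z), (∀ n, IsGammaCoverOf (Set.univ : Set Z) (𝒰 n)) →
    ∃ U : ℕ → Set Z, (∀ n, U n ∈ 𝒰 n) ∧ IsGammaCoverOf (Set.univ : Set Z) (Set.range U)

/-- `S₁(B_Γ,B_Γ)`: from every sequence of countable Borel γ-covers one can select single
members `B n` such that every point belongs to all but finitely many of them. -/
def SOneBGammaBGamma (Y : Type u) [TopologicalSpace Y] : Prop :=
  ∀ ℬ : ℕ → Set (Set Y),
    (∀ n, (ℬ n).Countable ∧ (ℬ n).Infinite ∧ (∀ B ∈ ℬ n, @MeasurableSet Y (borel Y) B) ∧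
      (∀ B ∈ ℬ n, ¬ (Set.univ : Set Y) ⊆ B) ∧ ∀ y : Y, {B ∈ ℬ n | y ∉ B}.Finite) →
    ∃ B : ℕ → Set Y, (∀ n, B n ∈ ℬ n) ∧ ∀ y : Y, ∀ᶠ n in atTop, y ∈ B n

/-! ### Auxiliary lemmas -/

lemma aux_nth_le_nth_add {p q : ℕ → Prop} [DecidablePred p] [DecidablePred q]
    (hq : {n | q n}.Infinite) (hd : {n | q n ∧ ¬ p n}.Finite) (n : ℕ) :
    Nat.nth p n ≤ Nat.nth q (n + hd.toFinset.card) := by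
  classical
  set c := hd.toFinset.card with hc
  set N := Nat.nth q (n + c) with hN
  have hqc : Nat.count q (N + 1) = n + c + 1 := Nat.count_nth_succ_of_infinite hq _
  have hsub : (Finset.range (N+1)).filter q ⊆ ((Finset.range (N+1)).filter p) ∪ hd.toFinset := by
    intro m hm
    simp only [Finset.mem_filter, Finset.mem_union, Finset.mem_range] at hm ⊢
    by_cases hp : p m
    · exact Or.inl ⟨hm.1, hp⟩
    · exact Or.inr (by rw [Set.Finite.mem_toFinset]; exact ⟨hm.2, hp⟩)
  have h2 : Nat.count q (N+1) ≤ Nat.count p (N+1) + c := by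
    rw [Nat.count_eq_card_filter_range, Nat.count_eq_card_filter_range]
    calc ((Finset.range (N+1)).filter q).card
        ≤ (((Finset.range (N+1)).filter p) ∪ hd.toFinset).card := Finset.card_le_card hsub
      _ ≤ ((Finset.range (N+1)).filter p).card + c := Finset.card_union_le _ _
  have h3 : n < Nat.count p (N+1) := by omega
  have h4 := Nat.nth_lt_of_lt_count h3
  omega

/-- Families of size less than `𝔟` are bounded. -/
lemma aux_bounded_of_lt_b {F : Set (ℕ → ℕ)} (h : Cardinal.mk ↥F < bCardinal) :
    ∃ g : ℕ → ℕ, ∀ f ∈ F, EvLE f g := by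
  by_contra h'
  have hmem : Cardinal.mk ↥F ∈ {c : Cardinal.{0} | ∃ F : Set (ℕ → ℕ),
      Cardinal.mk ↥F = c ∧ ¬ ∃ g : ℕ → ℕ, ∀ f ∈ F, EvLE f g} := ⟨F, rfl, h'⟩
  exact absurd (csInf_le' hmem) (not_le.2 h)

/-- An unbounded subset of `ℕ` is infinite. -/
lemma aux_infinite_of_unbounded {s : Set ℕ} (h : ∀ M, ∃ a ∈ s, M ≤ a) : s.Infinite := by
  intro hf
  obtain ⟨a, ha, hba⟩ := h (hf.toFinset.sup id + 1)
  have h2 : a ≤ hf.toFinset.sup id := Finset.le_sup (f := id) (hf.mem_toFinset.2 ha)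
  omega

theorem stmt18 (Y : Type u) [TopologicalSpace Y]
    (x : Ordinal.{0} → (ℕ → Bool))
    (hinf : ∀ α < bCardinal.ord, {n | x α n = true}.Infinite)
    (htower : ∀ α β : Ordinal.{0}, α < β → β < bCardinal.ord →
      {n | x β n = true ∧ x α n = false}.Finite)
    (hunb : ¬ ∃ g : ℕ → ℕ, ∀ α < bCardinal.ord,
      ∀ᶠ n in atTop, Nat.nth (fun k => x α k = true) n ≤ g n)
    (T X : Set (ℕ → Bool))
    (hT : T = x '' {α | α < bCardinal.ord}) (hX : X = T ∪ finSupp)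
    (hY : ∀ α < bCardinal.ord, SOneBGammaBGamma (↥(x '' {ξ | ξ < α}) × Y))
    (hmain : ∀ V : ℕ → ℕ → Set (↥X × Y),
      (∀ k, IsGammaCoverOf (Set.univ : Set (↥X × Y)) (Set.range (V k))) →
      ∃ n : ℕ → ℕ, ∃ A : Set (ℕ → Bool), finSupp ⊆ A ∧ A ⊆ X ∧
        Cardinal.mk ↥(T \ A) < bCardinal ∧
        IsGammaCoverOf {z : ↥X × Y | ↑z.1 ∈ A} (Set.range fun k => V k (n k))) :
    SOneGammaGamma (↥X × Y) := by
  classical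
  intro 𝒰 h𝒰
  -- countable injective enumerations of (subfamilies of) the covers
  have hUcex : ∀ k, ∃ f : ℕ → Set (↥X × Y), Function.Injective f ∧ ∀ m, f m ∈ 𝒰 k := by
    intro k
    refine ⟨fun m => ((h𝒰 k).1.natEmbedding _ m : Set (↥X × Y)),
      fun a b hab => ((h𝒰 k).1.natEmbedding _).injective (Subtype.ext hab),
      fun m => ((h𝒰 k).1.natEmbedding _ m).2⟩
  choose Uc hUcinj hUcmem using hUcex
  have hUopen : ∀ k m, IsOpen (Uc k m) := fun k m => (h𝒰 k).2.1 _ (hUcmem k m)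
  have hUnc : ∀ k m, ¬ (Set.univ : Set (↥X × Y)) ⊆ Uc k m := fun k m =>
    (h𝒰 k).2.2.1 _ (hUcmem k m)
  have hbad : ∀ (z : ↥X × Y) k, {m | z ∉ Uc k m}.Finite := by
    intro z k
    have h1 : {U ∈ 𝒰 k | z ∉ U}.Finite := (h𝒰 k).2.2.2 z (mem_univ z)
    have h2 : {m | z ∉ Uc k m} ⊆ (Uc k) ⁻¹' {U ∈ 𝒰 k | z ∉ U} :=
      fun m hm => ⟨hUcmem k m, hm⟩
    exact (h1.preimage ((hUcinj k).injOn)).subset h2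
  have hth : ∀ (z : ↥X × Y) k, ∃ M, ∀ m, M ≤ m → z ∈ Uc k m := by
    intro z k
    obtain ⟨b, hb⟩ := (hbad z k).bddAbove
    refine ⟨b + 1, fun m hm => by_contra fun h => ?_⟩
    have := hb h
    omega
  -- the sequence of covers fed to hmain: pairs (k, i) ↦ tail of cover k shifted by i
  set e : ℕ ≃ ℕ × ℕ := (Denumerable.eqv (ℕ × ℕ)).symm with he
  set V : ℕ → ℕ → Set (↥X × Y) := fun j m => Uc (e j).1 (m + (e j).2) with hV
  have hVgamma : ∀ j, IsGammaCoverOf (Set.univ : Set (↥X × Y)) (Set.range (V j)) := by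
    intro j
    refine ⟨?_, ?_, ?_, ?_⟩
    · exact Set.infinite_range_of_injective
        (fun a b hab => by
          have := hUcinj (e j).1 hab
          omega)
    · rintro U ⟨m, rfl⟩; exact hUopen _ _
    · rintro U ⟨m, rfl⟩; exact hUnc _ _
    · intro z _
      refine ((h𝒰 (e j).1).2.2.2 z (mem_univ z)).subset ?_
      rintro U ⟨⟨m, rfl⟩, hzU⟩
      exact ⟨hUcmem _ _, hzU⟩
  obtain ⟨n, A, hFinA, hAX, hcard, hγ⟩ := hmain V hVgamma
  -- 𝔟 is positive
  have h0 : (0 : Ordinal) < bCardinal.ord := by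
    by_contra h
    exact hunb ⟨fun _ => 0, fun β hβ =>
      absurd (hβ.trans_le (not_lt.1 h)) (by simp)⟩
  -- regularity: T \ A is contained in an initial segment of the tower
  obtain ⟨α, hα, hTA⟩ : ∃ α, α < bCardinal.ord ∧ T \ A ⊆ x '' {ξ | ξ < α} := by
    by_contra hno
    push_neg at hno
    set E : (ℕ → Bool) → ℕ → ℕ := fun y n => Nat.nth (fun k => y k = true) n with hE
    have hFcard : Cardinal.mk ↥(E '' (T \ A)) < bCardinal :=
      lt_of_le_of_lt Cardinal.mk_image_le hcard
    obtain ⟨g, hg⟩ := aux_bounded_of_lt_b hFcard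
    set g' : ℕ → ℕ := fun n => (Finset.range (2 * n + 1)).sup g with hg'
    refine hunb ⟨g', fun β hβ => ?_⟩
    obtain ⟨t, htTA, htn⟩ := Set.not_subset.1 (hno β hβ)
    have htT : t ∈ x '' {α | α < bCardinal.ord} := by rw [← hT]; exact htTA.1
    obtain ⟨ξ, hξo, hxt⟩ := htT
    have hβξ : β ≤ ξ := le_of_not_gt fun hlt => htn ⟨ξ, hlt, hxt⟩
    have hgξ : EvLE (E t) g := hg _ ⟨t, htTA, rfl⟩
    rw [← hxt] at hgξ
    have hmono : ∀ a b : ℕ, a ≤ 2 * b → g a ≤ g' b := by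
      intro a b hab
      refine Finset.le_sup (Finset.mem_range.2 ?_)
      omega
    rcases eq_or_lt_of_le hβξ with rfl | hlt
    · filter_upwards [hgξ] with m hm
      exact hm.trans (hmono m m (by omega))
    · have hdfin : {n' | x ξ n' = true ∧ ¬ x β n' = true}.Finite := by
        have h5 := htower β ξ hlt hξo
        refine h5.subset ?_
        intro m hm
        exact ⟨hm.1, by simp [hm.2]⟩
      have hkey : ∀ n' : ℕ, Nat.nth (fun k => x β k = true) n' ≤
          Nat.nth (fun k => x ξ k = true) (n' + hdfin.toFinset.card) :=
        fun n' => aux_nth_le_nth_add (hinf ξ hξo) hdfin n'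
      obtain ⟨N, hN⟩ := eventually_atTop.1 hgξ
      set c := hdfin.toFinset.card with hc
      filter_upwards [eventually_ge_atTop N, eventually_ge_atTop c] with m h1 h2
      calc Nat.nth (fun k => x β k = true) m
          ≤ Nat.nth (fun k => x ξ k = true) (m + c) := hkey m
        _ ≤ g (m + c) := hN _ (by omega)
        _ ≤ g' m := hmono (m + c) m (by omega)
  -- the small part of the product
  set P : Set (ℕ → Bool) := x '' {ξ | ξ < α} with hP
  have hPX : P ⊆ X := by
    rintro _ ⟨ξ, hξ, rfl⟩
    rw [hX]
    exact Or.inl (by rw [hT]; exact ⟨ξ, hξ.trans hα, rfl⟩)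
  set ι : ↥P × Y → ↥X × Y := fun p => (⟨(p.1 : ℕ → Bool), hPX p.1.2⟩, p.2) with hι
  have hιcont : Continuous ι := by
    exact ((continuous_inclusion hPX).comp continuous_fst).prodMk continuous_snd
  -- threshold Borel sets
  set B : ℕ → ℕ → Set (↥P × Y) := fun k m => {p | ∀ j, m ≤ j → ι p ∈ Uc k j} with hB
  have hBmono : ∀ k m m', m ≤ m' → B k m ⊆ B k m' := by
    intro k m m' hmm p hp j hj
    exact hp j (le_trans hmm hj)
  have hBmeas : ∀ k m, @MeasurableSet (↥P × Y) (borel _) (B k m) := by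
    intro k m
    have heq : B k m = ⋂ j, {p : ↥P × Y | m ≤ j → ι p ∈ Uc k j} := by
      ext p; simp [hB, Set.mem_iInter]
    rw [heq]
    refine @MeasurableSet.iInter _ _ (borel _) _ _ (fun j => ?_)
    by_cases hj : m ≤ j
    · have : {p : ↥P × Y | m ≤ j → ι p ∈ Uc k j} = ι ⁻¹' (Uc k j) := by
        ext p; simp [hj]
      rw [this]
      exact MeasurableSpace.measurableSet_generateFrom ((hUopen k j).preimage hιcont)
    · have : {p : ↥P × Y | m ≤ j → ι p ∈ Uc k j} = Set.univ := by
        ext p; simp [hj]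
      rw [this]
      exact @MeasurableSet.univ _ (borel _)
  have hBcov : ∀ (p : ↥P × Y) k, ∃ M, ∀ m, M ≤ m → p ∈ B k m := by
    intro p k
    obtain ⟨M, hM⟩ := hth (ι p) k
    exact ⟨M, fun m hm j hj => hM j (le_trans hm hj)⟩
  have hBbadfin : ∀ (p : ↥P × Y) k, {m | p ∉ B k m}.Finite := by
    intro p k
    obtain ⟨M, hM⟩ := hBcov p k
    refine (Set.finite_Iio M).subset (fun m hm => ?_)
    by_contra hmM
    exact hm (hM m (not_lt.1 hmM))
  -- obtain the bounding function for the small part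
  obtain ⟨gP, hgP⟩ : ∃ g : ℕ → ℕ, ∀ p : ↥P × Y,
      {k | ¬ ∀ j, g k ≤ j → ι p ∈ Uc k j}.Finite := by
    set q : ℕ → Prop := fun k => ¬ ∃ m, ∀ p : ↥P × Y, p ∈ B k m with hq
    by_cases hqinf : {k | q k}.Infinite
    · -- use S₁(BΓ,BΓ) on the subsequence where nontrivial selection is needed
      set φ : ℕ → ℕ := Nat.nth q with hφ
      have hφmem : ∀ j, q (φ j) := fun j => Nat.nth_mem_of_infinite hqinf j
      set ℬ : ℕ → Set (Set (↥P × Y)) := fun j => Set.range (B (φ j)) with hℬ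
      obtain ⟨Bsel, hBselmem, hBselev⟩ := hY α hα ℬ (by
        intro j
        refine ⟨Set.countable_range _, ?_, ?_, ?_, ?_⟩
        · -- infinite range
          by_contra hf
          have hfin := Set.not_infinite.mp hf
          refine hφmem j ?_
          have hex : ∀ W ∈ hfin.toFinset, ∃ i, B (φ j) i = W := by
            intro W hW
            obtain ⟨i, hi⟩ := hfin.mem_toFinset.mp hW
            exact ⟨i, hi⟩
          choose ind hind using hex
          set m₀ := hfin.toFinset.attach.sup (fun W => ind W.1 W.2) with hm₀
          refine ⟨m₀, fun p => ?_⟩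
          obtain ⟨M, hM⟩ := hBcov p (φ j)
          have hpM : p ∈ B (φ j) M := hM M le_rfl
          have hWmem : B (φ j) M ∈ hfin.toFinset := hfin.mem_toFinset.mpr ⟨M, rfl⟩
          have h5 : B (φ j) (ind (B (φ j) M) hWmem) = B (φ j) M := hind (B (φ j) M) hWmem
          have h6 : ind (B (φ j) M) hWmem ≤ m₀ :=
            Finset.le_sup (f := fun (W : {W // W ∈ hfin.toFinset}) => ind W.1 W.2)
              (Finset.mem_attach _ (⟨B (φ j) M, hWmem⟩ : {W // W ∈ hfin.toFinset}))
          refine hBmono (φ j) _ _ h6 ?_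
          rw [h5]
          exact hpM
        · rintro W ⟨m, rfl⟩; exact hBmeas _ _
        · rintro W ⟨m, rfl⟩ hcov
          exact hφmem j ⟨m, fun p => hcov (mem_univ p)⟩
        · intro p
          refine ((hBbadfin p (φ j)).image (B (φ j))).subset ?_
          rintro W ⟨⟨m, rfl⟩, hpW⟩
          exact ⟨m, hpW, rfl⟩)
      have hmsel : ∀ j, ∃ m, B (φ j) m = Bsel j := fun j => hBselmem j
      choose msel hmsel using hmsel
      refine ⟨fun k => if h : ∃ m, ∀ p : ↥P × Y, p ∈ B k m then h.choose
        else msel (Nat.count q k), fun p => ?_⟩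
      have hJfin : {j | p ∉ Bsel j}.Finite := by
        obtain ⟨N, hN⟩ := eventually_atTop.1 (hBselev p)
        refine (Set.finite_Iio N).subset (fun j hj => ?_)
        by_contra hjN
        exact hj (hN j (not_lt.1 hjN))
      refine ((hJfin.image φ)).subset ?_
      intro k hk
      by_cases h : ∃ m, ∀ p : ↥P × Y, p ∈ B k m
      · exfalso
        simp only [Set.mem_setOf_eq, dif_pos h] at hk
        exact hk (h.choose_spec p)
      · have hqk : q k := h
        have hφk : φ (Nat.count q k) = k := Nat.nth_count hqk
        simp only [Set.mem_setOf_eq, dif_neg h] at hk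
        refine ⟨Nat.count q k, ?_, hφk⟩
        rw [Set.mem_setOf_eq, ← hmsel (Nat.count q k), hφk]
        exact hk
    · -- almost all k admit a trivially covering member
      refine ⟨fun k => if h : ∃ m, ∀ p : ↥P × Y, p ∈ B k m then h.choose else 0,
        fun p => ?_⟩
      refine (Set.not_infinite.mp hqinf).subset ?_
      intro k hk
      by_contra hqk
      have h : ∃ m, ∀ p : ↥P × Y, p ∈ B k m := not_not.mp hqk
      simp only [Set.mem_setOf_eq, dif_pos h] at hk
      exact hk (h.choose_spec p)
  -- the final recursive selection
  set idx : ℕ → ℕ → ℕ := fun k i => n (e.symm (k, i)) + i with hidx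
  have hidxge : ∀ k i, i ≤ idx k i := fun k i => Nat.le_add_left i _
  have hval : ∀ k i, Uc k (idx k i) = V (e.symm (k, i)) (n (e.symm (k, i))) := by
    intro k i
    show Uc k (idx k i) =
      Uc (e (e.symm (k, i))).1 (n (e.symm (k, i)) + (e (e.symm (k, i))).2)
    rw [Equiv.apply_symm_apply]
  have hchoice : ∀ (k : ℕ) (l : List (Set (↥X × Y))), ∃ i, gP k ≤ i ∧ Uc k (idx k i) ∉ l := by
    intro k l
    have hS : ((fun i => idx k i) '' {i | gP k ≤ i}).Infinite := by
      refine aux_infinite_of_unbounded (fun M => ?_)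
      refine ⟨idx k (max M (gP k)), ⟨max M (gP k), le_max_right M (gP k), rfl⟩, ?_⟩
      have h7 : max M (gP k) ≤ idx k (max M (gP k)) := hidxge _ _
      omega
    have hval2 : (Uc k '' ((fun i => idx k i) '' {i | gP k ≤ i})).Infinite :=
      Set.Infinite.image ((hUcinj k).injOn) hS
    obtain ⟨a, ⟨m, ⟨i, hi, rfl⟩, rfl⟩, hal⟩ := hval2.exists_notMem_finset l.toFinset
    exact ⟨i, hi, fun hmem => hal (List.mem_toFinset.2 hmem)⟩
  set step : ℕ → List (Set (↥X × Y)) → ℕ := fun k l => (hchoice k l).choose with hstep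
  set L : ℕ → List (Set (↥X × Y)) :=
    fun k => Nat.rec [] (fun k ih => ih ++ [Uc k (idx k (step k ih))]) k with hL
  set I : ℕ → ℕ := fun k => step k (L k) with hI
  set U : ℕ → Set (↥X × Y) := fun k => Uc k (idx k (I k)) with hU
  have hLsucc : ∀ k, L (k + 1) = L k ++ [U k] := fun k => rfl
  have hIge : ∀ k, gP k ≤ I k := fun k => (hchoice k (L k)).choose_spec.1
  have hUnotin : ∀ k, U k ∉ L k := fun k => (hchoice k (L k)).choose_spec.2
  have hmemL : ∀ m k, m < k → U m ∈ L k := by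
    intro m k hmk
    induction k with
    | zero => omega
    | succ k ih =>
      rw [hLsucc k]
      rcases Nat.lt_or_ge m k with h | h
      · exact List.mem_append_left _ (ih h)
      · have : m = k := by omega
        subst this
        exact List.mem_append_right _ (List.mem_singleton.2 rfl)
  have hUinj : Function.Injective U := by
    intro a b hab
    by_contra hne
    rcases Nat.lt_or_ge a b with h | h
    · exact hUnotin b (hab ▸ hmemL a b h)
    · have h' : b < a := by omega
      exact hUnotin a (hab ▸ hmemL b a h')
  refine ⟨U, fun k => hUcmem k _, ?_, ?_, ?_, ?_⟩
  · exact Set.infinite_range_of_injective hUinj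
  · rintro W ⟨k, rfl⟩; exact hUopen _ _
  · rintro W ⟨k, rfl⟩; exact hUnc _ _
  · intro z _
    by_cases hzA : (↑z.1 : ℕ → Bool) ∈ A
    · refine (hγ.2.2.2 z hzA).subset ?_
      rintro W ⟨⟨k, rfl⟩, hzW⟩
      exact ⟨⟨e.symm (k, I k), (hval k (I k)).symm⟩, hzW⟩
    · have hzT : (↑z.1 : ℕ → Bool) ∈ T := by
        have hz1 : (↑z.1 : ℕ → Bool) ∈ T ∪ finSupp := by
          rw [← hX]; exact z.1.2
        rcases hz1 with h | h
        · exact h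
        · exact absurd (hFinA h) hzA
      have hzP : (↑z.1 : ℕ → Bool) ∈ P := hTA ⟨hzT, hzA⟩
      set p : ↥P × Y := (⟨(↑z.1 : ℕ → Bool), hzP⟩, z.2) with hp
      have hιp : ι p = z := by
        show ((⟨(↑z.1 : ℕ → Bool), hPX hzP⟩ : ↥X), z.2) = z
        exact Prod.ext (Subtype.ext rfl) rfl
      refine ((hgP p).image U).subset ?_
      rintro W ⟨⟨k, rfl⟩, hzW⟩
      refine ⟨k, fun hall => hzW ?_, rfl⟩
      have h1 : ι p ∈ Uc k (idx k (I k)) :=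
        hall _ (le_trans (hIge k) (hidxge k (I k)))
      rwa [hιp] at h1
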